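/- Let Q be a Borel probability measure on [0,1] and set r = inf_{x ∈ [0,1]} [ ∫_{[0,x]} t dQ(t) + 1 − x ]. Then r is tight for the quantile mechanism over the seller's distribution: for every ε > 0 there exists an instance I = (F_S, F_B) of bilateral trade with 0 < OPT(I) < ∞ such that ∫ W(I, F_S^{-1}(t)) dQ(t) ≤ (r + ε) · OPT(I). -/

import Mathlib

open MeasureTheory

/-- Expected welfare of the fixed price `p` on the bilateral-trade instance `(μ, ν)`. -/
noncomputable def welfare (μ ν : Measure ℝ) (p : ℝ) : ℝ :=
  ∫ z : ℝ × ℝ, (z.1 + if z.1 ≤ p ∧ p ≤ z.2 then z.2 - z.1 else 0) ∂(μ.prod ν)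

/-- Optimal welfare `OPT(I) = E[max(S,B)]`. -/
noncomputable def optWelfare (μ ν : Measure ℝ) : ℝ :=
  ∫ z : ℝ × ℝ, max z.1 z.2 ∂(μ.prod ν)

/-- The quantile function of a measure `F` on `ℝ`:
`F⁻¹(x) = inf { y | F((−∞,y]) ≥ x }`. -/
noncomputable def quantileFn (F : Measure ℝ) (x : ℝ) : ℝ :=
  sInf { y : ℝ | x ≤ (F (Set.Iic y)).toReal }

/-- The quantity `r = inf_{x ∈ [0,1]} [∫_{[0,x]} t dQ(t) + 1 − x]`. -/
noncomputable def sellerQuantRatio (Q : Measure ℝ) : ℝ :=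
  sInf { v : ℝ | ∃ x : ℝ, 0 ≤ x ∧ x ≤ 1 ∧
    v = (∫ t in Set.Icc (0:ℝ) x, t ∂Q) + 1 - x }

namespace Stmt12Aux

open Set

noncomputable def mu (x δ : ℝ) : Measure ℝ :=
  ENNReal.ofReal (x / δ) • volume.restrict (Ioc 0 δ) +
    ENNReal.ofReal (1 - x) • Measure.dirac 1

variable {x δ : ℝ}

lemma integrable_dirac {f : ℝ → ℝ} (a : ℝ) : Integrable f (Measure.dirac a) :=
  (integrable_const (f a)).congr (ae_eq_dirac f).symm

lemma isProb_mu (hx0 : 0 ≤ x) (hx1 : x ≤ 1) (hδ : 0 < δ) :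
    IsProbabilityMeasure (mu x δ) := by
  constructor
  simp only [mu, Measure.add_apply, Measure.smul_apply, smul_eq_mul,
    Measure.restrict_apply MeasurableSet.univ, Set.univ_inter, Real.volume_Ioc,
    Measure.dirac_apply_of_mem (Set.mem_univ (1:ℝ)), mul_one, sub_zero]
  rw [← ENNReal.ofReal_mul (by positivity), div_mul_cancel₀ _ hδ.ne',
    ← ENNReal.ofReal_add hx0 (by linarith)]
  norm_num

lemma integrable_mu {f : ℝ → ℝ} (hf : Measurable f) {C : ℝ}
    (hC : ∀ s ∈ Ioc (0:ℝ) δ, ‖f s‖ ≤ C) : Integrable f (mu x δ) := by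
  refine Integrable.add_measure (Integrable.smul_measure ?_ ENNReal.ofReal_ne_top)
    (Integrable.smul_measure (integrable_dirac 1) ENNReal.ofReal_ne_top)
  refine Measure.integrableOn_of_bounded (M := C) ?_ hf.aestronglyMeasurable ?_
  · simp [Real.volume_Ioc]
  · exact (ae_restrict_iff' measurableSet_Ioc).2 (ae_of_all _ hC)

lemma integral_mu (hx0 : 0 ≤ x) (hx1 : x ≤ 1) (hδ : 0 < δ) {f : ℝ → ℝ}
    (hf : Measurable f) {C : ℝ} (hC : ∀ s ∈ Ioc (0:ℝ) δ, ‖f s‖ ≤ C) :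
    ∫ s, f s ∂(mu x δ) = (x / δ) * (∫ s in Ioc (0:ℝ) δ, f s) + (1 - x) * f 1 := by
  have h1 : Integrable f (ENNReal.ofReal (x / δ) • volume.restrict (Ioc (0:ℝ) δ)) := by
    refine Integrable.smul_measure ?_ ENNReal.ofReal_ne_top
    refine Measure.integrableOn_of_bounded (M := C) ?_ hf.aestronglyMeasurable ?_
    · simp [Real.volume_Ioc]
    · exact (ae_restrict_iff' measurableSet_Ioc).2 (ae_of_all _ hC)
  have h2 : Integrable f (ENNReal.ofReal (1 - x) • Measure.dirac 1) :=
    (integrable_dirac 1).smul_measure ENNReal.ofReal_ne_top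
  rw [mu, integral_add_measure h1 h2, integral_smul_measure, integral_smul_measure,
    integral_dirac _ _ , ENNReal.toReal_ofReal (by positivity),
    ENNReal.toReal_ofReal (by linarith), smul_eq_mul, smul_eq_mul]


lemma mu_Iio (hδ : 0 < δ) : mu x δ (Iio 0) = 0 := by
  have h1 : Iio (0:ℝ) ∩ Ioc 0 δ = ∅ := by
    ext s; simp only [mem_inter_iff, mem_Iio, mem_Ioc, mem_empty_iff_false, iff_false]
    rintro ⟨h, h', _⟩; linarith
  simp [mu, Measure.restrict_apply measurableSet_Iio, h1,
    Measure.dirac_apply' _ measurableSet_Iio]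

lemma mu_Iic_lt_one (hx0 : 0 ≤ x) (hδ : 0 < δ) {y : ℝ} (hy : y < 1) :
    mu x δ (Iic y) = ENNReal.ofReal (x / δ * min δ y) := by
  have hd : Measure.dirac (1:ℝ) (Iic y) = 0 := by
    rw [Measure.dirac_apply' _ measurableSet_Iic]
    simp [hy.not_ge]
  have hv : Ioc (0:ℝ) δ ∩ Iic y = Ioc 0 (min δ y) := Ioc_inter_Iic 0 δ y
  simp only [mu, Measure.add_apply, Measure.smul_apply, smul_eq_mul,
    Measure.restrict_apply measurableSet_Iic, Set.inter_comm (Iic y), hv, hd, mul_zero, add_zero,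
    Real.volume_Ioc, sub_zero]
  rw [ENNReal.ofReal_mul (by positivity)]

lemma mu_Iic_one_le (hx0 : 0 ≤ x) (hx1 : x ≤ 1) (hδ : 0 < δ) (hδ1 : δ ≤ 1) {y : ℝ}
    (hy : 1 ≤ y) : mu x δ (Iic y) = 1 := by
  have hd : Measure.dirac (1:ℝ) (Iic y) = 1 := by
    rw [Measure.dirac_apply' _ measurableSet_Iic]
    simp [hy]
  have hv : Ioc (0:ℝ) δ ∩ Iic y = Ioc 0 δ := by
    refine inter_eq_self_of_subset_left fun s hs => le_trans (le_trans hs.2 hδ1) hy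
  simp only [mu, Measure.add_apply, Measure.smul_apply, smul_eq_mul,
    Measure.restrict_apply measurableSet_Iic, Set.inter_comm (Iic y), hv, hd, mul_one,
    Real.volume_Ioc, sub_zero]
  rw [← ENNReal.ofReal_mul (by positivity), div_mul_cancel₀ _ hδ.ne',
    ← ENNReal.ofReal_add hx0 (by linarith)]
  norm_num

lemma quantile_nonpos {t : ℝ} (ht : t ≤ 0) : quantileFn (mu x δ) t = 0 := by
  have hset : { y : ℝ | t ≤ ((mu x δ) (Set.Iic y)).toReal } = univ :=
    eq_univ_of_forall fun y => le_trans ht ENNReal.toReal_nonneg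
  have hnb : ¬ BddBelow (univ : Set ℝ) := fun ⟨b, hb⟩ => by
    have := hb (mem_univ (b - 1)); linarith
  rw [quantileFn, hset, csInf_of_not_bddBelow hnb, Real.sInf_empty]

lemma quantile_mid (hx1 : x ≤ 1) (hδ : 0 < δ) (hδ2 : δ ≤ 1/2) {t : ℝ}
    (ht0 : 0 < t) (htx : t ≤ x) : quantileFn (mu x δ) t = δ * t / x := by
  have hx : 0 < x := lt_of_lt_of_le ht0 htx
  set p := δ * t / x with hp
  have hp0 : 0 < p := by positivity
  have hpδ : p ≤ δ := by
    rw [hp, div_le_iff₀ hx]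
    calc δ * t ≤ δ * x := by nlinarith
    _ = δ * x := rfl
  have hp1 : p < 1 := lt_of_le_of_lt hpδ (by linarith)
  refine IsLeast.csInf_eq ⟨?_, ?_⟩
  · show t ≤ _
    rw [mu_Iic_lt_one hx.le hδ hp1, min_eq_right hpδ]
    have : x / δ * p = t := by rw [hp]; field_simp
    rw [this, ENNReal.toReal_ofReal ht0.le]
  · rintro y hy
    by_contra hlt
    push_neg at hlt
    have hy1 : y < 1 := lt_trans hlt hp1
    rw [Set.mem_setOf_eq, mu_Iic_lt_one hx.le hδ hy1] at hy
    rcases le_or_gt y 0 with h0 | h0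
    · have : min δ y ≤ 0 := le_trans (min_le_right _ _) h0
      have : x / δ * min δ y ≤ 0 := mul_nonpos_of_nonneg_of_nonpos (by positivity) this
      rw [ENNReal.ofReal_eq_zero.2 this] at hy
      simp at hy; linarith
    · have hmin : min δ y = y := min_eq_right (le_of_lt (lt_of_lt_of_le hlt hpδ))
      rw [hmin, ENNReal.toReal_ofReal (by positivity)] at hy
      have : x / δ * y < x / δ * p := by
        apply mul_lt_mul_of_pos_left hlt (by positivity)
      have hxp : x / δ * p = t := by rw [hp]; field_simp
      linarith

lemma quantile_high (hx0 : 0 ≤ x) (hx1 : x ≤ 1) (hδ : 0 < δ) (hδ2 : δ ≤ 1/2) {t : ℝ}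
    (htx : x < t) (ht1 : t ≤ 1) : quantileFn (mu x δ) t = 1 := by
  refine IsLeast.csInf_eq ⟨?_, ?_⟩
  · show t ≤ _
    rw [mu_Iic_one_le hx0 hx1 hδ (by linarith) le_rfl]
    simpa using ht1
  · rintro y hy
    by_contra hlt
    push_neg at hlt
    rw [Set.mem_setOf_eq, mu_Iic_lt_one hx0 hδ hlt] at hy
    have hle : x / δ * min δ y ≤ x := by
      calc x / δ * min δ y ≤ x / δ * δ :=
        mul_le_mul_of_nonneg_left (min_le_left _ _) (by positivity)
      _ = x := by field_simp
    have : ((ENNReal.ofReal (x / δ * min δ y))).toReal ≤ x := by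
      calc _ ≤ (ENNReal.ofReal x).toReal :=
        ENNReal.toReal_mono ENNReal.ofReal_ne_top (ENNReal.ofReal_le_ofReal hle)
      _ = x := ENNReal.toReal_ofReal hx0
    linarith



lemma meas_f (p b : ℝ) :
    Measurable (fun z : ℝ × ℝ => z.1 + if z.1 ≤ p ∧ p ≤ z.2 then z.2 - z.1 else 0) := by
  apply measurable_fst.add
  refine Measurable.ite ?_ (measurable_snd.sub measurable_fst) measurable_const
  have : {z : ℝ × ℝ | z.1 ≤ p ∧ p ≤ z.2} =
      {z : ℝ × ℝ | z.1 ≤ p} ∩ {z : ℝ × ℝ | p ≤ z.2} := rfl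
  rw [this]
  exact (measurableSet_le measurable_fst measurable_const).inter
    (measurableSet_le measurable_const measurable_snd)

lemma welfare_eq (hx0 : 0 ≤ x) (hx1 : x ≤ 1) (hδ : 0 < δ) (p b : ℝ) :
    welfare (mu x δ) (Measure.dirac b) p =
      ∫ s, (s + if s ≤ p ∧ p ≤ b then b - s else 0) ∂(mu x δ) := by
  haveI := isProb_mu hx0 hx1 hδ
  rw [welfare, Measure.prod_dirac, integral_map
    (f := fun z : ℝ × ℝ => z.1 + if z.1 ≤ p ∧ p ≤ z.2 then z.2 - z.1 else 0)
    measurable_prodMk_right.aemeasurable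
    (meas_f p b).aestronglyMeasurable]

lemma welfare_nonneg (hx0 : 0 ≤ x) (hx1 : x ≤ 1) (hδ : 0 < δ) (p : ℝ) {b : ℝ}
    (hb : 0 ≤ b) : 0 ≤ welfare (mu x δ) (Measure.dirac b) p := by
  rw [welfare_eq hx0 hx1 hδ]
  apply integral_nonneg_of_ae
  have hae : ∀ᵐ s ∂(mu x δ), 0 ≤ s := by
    rw [ae_iff]
    have : {s : ℝ | ¬ 0 ≤ s} = Iio 0 := by ext s; simp
    rw [this, mu_Iio hδ]
  filter_upwards [hae] with s hs
  by_cases h : s ≤ p ∧ p ≤ b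
  · simp [h, hb]
  · simp [h, hs]

lemma welfare_high (hx0 : 0 ≤ x) (hx1 : x ≤ 1) (hδ : 0 < δ) {p b : ℝ}
    (hb : b < p) : welfare (mu x δ) (Measure.dirac b) p = x * δ / 2 + (1 - x) := by
  rw [welfare_eq hx0 hx1 hδ]
  have hfe : (fun s : ℝ => s + if s ≤ p ∧ p ≤ b then b - s else 0) = fun s : ℝ => s := by
    funext s
    have : ¬ (s ≤ p ∧ p ≤ b) := fun h => absurd h.2 (not_le.2 hb)
    simp [this]
  rw [hfe, integral_mu hx0 hx1 hδ (f := fun s : ℝ => s) measurable_id (C := δ)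
    (fun s hs => by rw [Real.norm_eq_abs, abs_of_pos hs.1]; exact hs.2)]
  have : (∫ s in Ioc (0:ℝ) δ, s) = δ ^ 2 / 2 := by
    rw [← intervalIntegral.integral_of_le hδ.le, integral_id]
    ring
  rw [this, mul_one]
  field_simp

lemma welfare_low (hx0 : 0 ≤ x) (hx1 : x ≤ 1) (hδ : 0 < δ) (hδ2 : δ ≤ 1/2) {p b : ℝ}
    (hp : p ≤ b) (hb1 : b < 1) :
    welfare (mu x δ) (Measure.dirac b) p ≤
      (x * δ / 2 + (1 - x)) + (x / δ) * min δ (max p 0) := by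
  rw [welfare_eq hx0 hx1 hδ]
  have hmeas : Measurable (fun s : ℝ => if s ≤ p ∧ p ≤ b then b - s else 0) := by
    refine Measurable.ite ?_ (measurable_const.sub measurable_id) measurable_const
    have : {s : ℝ | s ≤ p ∧ p ≤ b} = {s : ℝ | s ≤ p} ∩ {s : ℝ | p ≤ b} := rfl
    rw [this]
    exact (measurableSet_le measurable_id measurable_const).inter (MeasurableSet.const _)
  have hhb : ∀ s : ℝ, 0 < s → (0 ≤ (if s ≤ p ∧ p ≤ b then b - s else 0) ∧
      (if s ≤ p ∧ p ≤ b then b - s else 0) ≤ 1) := by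
    intro s h1
    by_cases hc : s ≤ p ∧ p ≤ b
    · have : s ≤ b := le_trans hc.1 hc.2
      simp only [if_pos hc]
      constructor <;> linarith
    · simp [hc]
  have hbound : ∀ s ∈ Ioc (0:ℝ) δ,
      ‖s + (if s ≤ p ∧ p ≤ b then b - s else 0)‖ ≤ 2 := by
    intro s hs
    obtain ⟨h0, hle⟩ := hhb s hs.1
    rw [Real.norm_eq_abs, abs_of_pos (by linarith [hs.1])]
    have : s ≤ δ := hs.2
    linarith
  rw [integral_mu hx0 hx1 hδ
    (f := fun s : ℝ => s + if s ≤ p ∧ p ≤ b then b - s else 0)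
    (measurable_id.add hmeas) hbound]
  have hone : (if (1:ℝ) ≤ p ∧ p ≤ b then b - 1 else 0) = 0 := by
    have : ¬ ((1:ℝ) ≤ p ∧ p ≤ b) := fun hc => absurd (le_trans hc.1 hc.2) (not_le.2 hb1)
    simp [this]
  have hsum : (∫ s in Ioc (0:ℝ) δ, (s + if s ≤ p ∧ p ≤ b then b - s else 0)) =
      (∫ s in Ioc (0:ℝ) δ, s) + ∫ s in Ioc (0:ℝ) δ, (if s ≤ p ∧ p ≤ b then b - s else 0) := by
    refine integral_add ?_ ?_
    · exact Measure.integrableOn_of_bounded (M := δ) (by simp [Real.volume_Ioc])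
        measurable_id.aestronglyMeasurable
        ((ae_restrict_iff' measurableSet_Ioc).2 (ae_of_all _ (fun s hs => by
          rw [Real.norm_eq_abs, abs_of_pos hs.1]; exact hs.2)))
    · exact Measure.integrableOn_of_bounded (M := 1) (by simp [Real.volume_Ioc])
        hmeas.aestronglyMeasurable
        ((ae_restrict_iff' measurableSet_Ioc).2 (ae_of_all _ (fun s hs => by
          obtain ⟨h0, hle⟩ := hhb s hs.1
          rw [Real.norm_eq_abs, abs_of_nonneg h0]; exact hle)))
  have hind : (fun s : ℝ => if s ≤ p ∧ p ≤ b then b - s else 0) =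
      (Iic p).indicator (fun s => b - s) := by
    funext s
    by_cases hc : s ≤ p
    · simp [hc, hp, Set.indicator_of_mem (mem_Iic.2 hc)]
    · simp [hc, Set.indicator_of_notMem (fun hm => hc (mem_Iic.1 hm))]
  have hint : (∫ s in Ioc (0:ℝ) δ, (if s ≤ p ∧ p ≤ b then b - s else 0)) ≤
      min δ (max p 0) := by
    have : (∫ s in Ioc (0:ℝ) δ, (if s ≤ p ∧ p ≤ b then b - s else 0)) =
        ∫ s in Ioc (0:ℝ) (min δ p), (b - s) := by
      conv_lhs => rw [show (fun s : ℝ => if s ≤ p ∧ p ≤ b then b - s else 0) =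
        (Iic p).indicator (fun s => b - s) from hind]
      rw [setIntegral_indicator measurableSet_Iic, Ioc_inter_Iic]
    rw [this]
    rcases le_or_gt p 0 with hp0 | hp0
    · have hm : min δ p ≤ 0 := le_trans (min_le_right _ _) hp0
      rw [Set.Ioc_eq_empty (not_lt.2 hm)]
      simp [max_eq_right hp0, min_eq_right hδ.le]
    · have hm : (0:ℝ) < min δ p := lt_min hδ hp0
      have hmax : max p 0 = p := max_eq_left hp0.le
      rw [hmax]
      calc (∫ s in Ioc (0:ℝ) (min δ p), (b - s))
          ≤ ∫ _ in Ioc (0:ℝ) (min δ p), (1:ℝ) := by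
            refine setIntegral_mono_on ?_ ?_ measurableSet_Ioc ?_
            · exact Measure.integrableOn_of_bounded (M := |b| + min δ p)
                (by simp [Real.volume_Ioc])
                (measurable_const.sub measurable_id).aestronglyMeasurable
                ((ae_restrict_iff' measurableSet_Ioc).2 (ae_of_all _ (fun s hs => by
                  rw [Real.norm_eq_abs]
                  have := abs_sub_abs_le_abs_sub b s
                  have h1 : |s| ≤ min δ p := by
                    rw [abs_of_pos hs.1]; exact hs.2
                  calc |b - s| ≤ |b| + |s| := abs_sub b s
                  _ ≤ |b| + min δ p := by linarith)))
            · exact (integrableOn_const_iff (C := (1:ℝ)) (by simp)).2 (Or.inr (by simp [Real.volume_Ioc]))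
            · intro s hs
              have : 0 < s := hs.1
              linarith
      _ = min δ p := by
            rw [setIntegral_const, Real.volume_real_Ioc_of_le hm.le, smul_eq_mul, mul_one, sub_zero]
  have hid : (∫ s in Ioc (0:ℝ) δ, s) = δ ^ 2 / 2 := by
    rw [← intervalIntegral.integral_of_le hδ.le, integral_id]; ring
  rw [hsum, hid, hone]
  have hxδ : 0 ≤ x / δ := by positivity
  have h3 : x / δ * (δ ^ 2 / 2 + ∫ s in Ioc (0:ℝ) δ, (if s ≤ p ∧ p ≤ b then b - s else 0)) =
      x * δ / 2 + x / δ * ∫ s in Ioc (0:ℝ) δ, (if s ≤ p ∧ p ≤ b then b - s else 0) := by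
    field_simp
  rw [h3]
  have h2 := mul_le_mul_of_nonneg_left hint hxδ
  linarith

lemma integrable_max (hx0 : 0 ≤ x) (hx1 : x ≤ 1) (hδ : 0 < δ) (hδ2 : δ ≤ 1/2) (b : ℝ)
    (hb0 : 0 ≤ b) (hb1 : b ≤ 1) :
    Integrable (fun z : ℝ × ℝ => max z.1 z.2) ((mu x δ).prod (Measure.dirac b)) := by
  haveI := isProb_mu hx0 hx1 hδ
  rw [Measure.prod_dirac]
  refine (integrable_map_measure ?_ measurable_prodMk_right.aemeasurable).2 ?_
  · exact (measurable_fst.max measurable_snd).aestronglyMeasurable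
  · exact integrable_mu (measurable_id.max measurable_const) (C := 1)
      (fun s hs => by
        show ‖max s b‖ ≤ 1
        rw [Real.norm_eq_abs, abs_of_nonneg (le_trans hb0 (le_max_right s b))]
        exact max_le (le_trans hs.2 (by linarith)) hb1)

lemma opt_eq (hx0 : 0 ≤ x) (hx1 : x ≤ 1) (hδ : 0 < δ) (hδ2 : δ ≤ 1/2) :
    optWelfare (mu x δ) (Measure.dirac (1 - δ)) = 1 - x * δ := by
  haveI := isProb_mu hx0 hx1 hδ
  rw [optWelfare, Measure.prod_dirac, integral_map
    (f := fun z : ℝ × ℝ => max z.1 z.2)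
    measurable_prodMk_right.aemeasurable
    (measurable_fst.max measurable_snd).aestronglyMeasurable]
  rw [integral_mu hx0 hx1 hδ (f := fun s : ℝ => max s (1 - δ))
    (measurable_id.max measurable_const) (C := 1)
    (fun s hs => by
      rw [Real.norm_eq_abs, abs_of_nonneg (le_trans (by linarith) (le_max_right s (1-δ)))]
      exact max_le (le_trans hs.2 (by linarith)) (by linarith))]
  have hc : (∫ s in Ioc (0:ℝ) δ, max s (1 - δ)) = δ * (1 - δ) := by
    rw [setIntegral_congr_fun measurableSet_Ioc
      (g := fun _ : ℝ => (1 - δ)) (fun s hs => max_eq_right (le_trans hs.2 (by linarith)))]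
    rw [setIntegral_const, Real.volume_real_Ioc_of_le hδ.le, smul_eq_mul, sub_zero]
  rw [hc, max_eq_left (by linarith)]
  field_simp
  ring

end Stmt12Aux

/-- The bound `sellerQuantRatio Q` is tight for the quantile mechanism over the seller's
distribution: for every `ε > 0` there is an instance on which the mechanism posting
`F_S⁻¹(t)`, `t ~ Q`, gets at most `(r + ε) · OPT`. -/
theorem stmt_12 (Q : Measure ℝ) [IsProbabilityMeasure Q]
    (hQ : Q (Set.Icc (0:ℝ) 1)ᶜ = 0) (ε : ℝ) (hε : 0 < ε) :
    ∃ μ ν : Measure ℝ, IsProbabilityMeasure μ ∧ IsProbabilityMeasure ν ∧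
      μ (Set.Iio 0) = 0 ∧ ν (Set.Iio 0) = 0 ∧
      Integrable (fun z : ℝ × ℝ => max z.1 z.2) (μ.prod ν) ∧
      0 < optWelfare μ ν ∧
      (∫ t, welfare μ ν (quantileFn μ t) ∂Q) ≤ (sellerQuantRatio Q + ε) * optWelfare μ ν := by
  classical
  open Stmt12Aux Set in
  set r := sellerQuantRatio Q with hr
  set S := { v : ℝ | ∃ x : ℝ, 0 ≤ x ∧ x ≤ 1 ∧
    v = (∫ t in Set.Icc (0:ℝ) x, t ∂Q) + 1 - x } with hS
  have hrS : r = sInf S := rfl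
  have hzero : (∫ t in Set.Icc (0:ℝ) 0, t ∂Q) = 0 := by
    rw [Set.Icc_self]
    simp [Measure.restrict_singleton]
  have h1S : (1:ℝ) ∈ S := ⟨0, le_rfl, zero_le_one, by rw [hzero]; ring⟩
  have hbdd : BddBelow S := by
    refine ⟨0, ?_⟩
    rintro v ⟨x, hx0, hx1, rfl⟩
    have : 0 ≤ ∫ t in Set.Icc (0:ℝ) x, t ∂Q :=
      setIntegral_nonneg measurableSet_Icc (fun t ht => ht.1)
    linarith
  have hr0 : 0 ≤ r := by
    rw [hrS]
    refine le_csInf ⟨1, h1S⟩ ?_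
    rintro v ⟨x, hx0, hx1, rfl⟩
    have : 0 ≤ ∫ t in Set.Icc (0:ℝ) x, t ∂Q :=
      setIntegral_nonneg measurableSet_Icc (fun t ht => ht.1)
    linarith
  have hr1 : r ≤ 1 := by rw [hrS]; exact csInf_le hbdd h1S
  obtain ⟨v, ⟨x, hx0, hx1, hv⟩, hvlt⟩ :=
    (csInf_lt_iff hbdd ⟨1, h1S⟩).1 (show sInf S < r + ε/2 by rw [← hrS]; linarith)
  set A := ∫ t in Set.Icc (0:ℝ) x, t ∂Q with hA
  set δ : ℝ := min (1/2) (ε/(3+2*ε)) with hδdef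
  have hδ : 0 < δ := lt_min (by norm_num) (by positivity)
  have hδ2 : δ ≤ 1/2 := min_le_left _ _
  have hδε : 3*δ + 2*(δ*ε) ≤ ε := by
    have h3 : (0:ℝ) < 3 + 2*ε := by linarith
    have := (le_div_iff₀ h3).1 (min_le_right (1/2 : ℝ) (ε/(3+2*ε)))
    nlinarith
  have hb0 : (0:ℝ) ≤ 1 - δ := by linarith
  have hb1 : (1:ℝ) - δ < 1 := by linarith
  haveI hPμ := isProb_mu hx0 hx1 hδ
  refine ⟨mu x δ, Measure.dirac (1 - δ), hPμ, inferInstance, mu_Iio hδ, ?_,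
    integrable_max hx0 hx1 hδ hδ2 (1-δ) hb0 (by linarith), ?_, ?_⟩
  · rw [Measure.dirac_apply' _ measurableSet_Iio]
    simp [Set.indicator_of_notMem, not_lt.2 hb0]
  · rw [opt_eq hx0 hx1 hδ hδ2]
    nlinarith
  -- main inequality
  have hind_int : Integrable ((Set.Icc (0:ℝ) x).indicator (fun t : ℝ => t)) Q := by
    refine Integrable.mono' (integrable_const (1:ℝ))
      ((measurable_id.indicator measurableSet_Icc).aestronglyMeasurable) (ae_of_all _ ?_)
    intro t
    by_cases ht : t ∈ Set.Icc (0:ℝ) x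
    · rw [Set.indicator_of_mem ht]
      rw [Real.norm_eq_abs, abs_of_nonneg ht.1]
      exact le_trans ht.2 hx1
    · rw [Set.indicator_of_notMem ht]; simp
  have gint : Integrable (fun t : ℝ =>
      (x*δ/2 + (1-x)) + (Set.Icc (0:ℝ) x).indicator (fun t : ℝ => t) t) Q :=
    (integrable_const _).add hind_int
  have haeQ : ∀ᵐ t ∂Q, t ∈ Set.Icc (0:ℝ) 1 := by
    rw [ae_iff]
    exact hQ
  have hle : ∀ᵐ t ∂Q, welfare (mu x δ) (Measure.dirac (1-δ)) (quantileFn (mu x δ) t) ≤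
      (x*δ/2 + (1-x)) + (Set.Icc (0:ℝ) x).indicator (fun t : ℝ => t) t := by
    filter_upwards [haeQ] with t ht
    rcases lt_or_ge x t with hxt | htx
    · rw [quantile_high hx0 hx1 hδ hδ2 hxt ht.2, welfare_high hx0 hx1 hδ hb1]
      have hnm : t ∉ Set.Icc (0:ℝ) x := fun hm => absurd hm.2 (not_le.2 hxt)
      rw [Set.indicator_of_notMem hnm]
      linarith
    · rcases eq_or_lt_of_le ht.1 with h0 | h0
      · rw [← h0, quantile_nonpos le_rfl]
        have := welfare_low hx0 hx1 hδ hδ2 (p := 0) (b := 1-δ) hb0 hb1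
        have hmin : min δ (max (0:ℝ) 0) = 0 := by
          rw [max_self, min_eq_right hδ.le]
        rw [hmin, mul_zero, add_zero] at this
        have h0m : (0:ℝ) ∈ Set.Icc (0:ℝ) x := ⟨le_rfl, hx0⟩
        rw [Set.indicator_of_mem h0m]
        simpa using this
      · rw [quantile_mid hx1 hδ hδ2 h0 htx]
        have hx : 0 < x := lt_of_lt_of_le h0 htx
        have hpδ : δ * t / x ≤ δ := by
          rw [div_le_iff₀ hx]; nlinarith
        have hp0 : 0 < δ * t / x := by positivity
        have hpb : δ * t / x ≤ 1 - δ := by linarith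
        have hw := welfare_low hx0 hx1 hδ hδ2 hpb hb1
        have hmin : min δ (max (δ * t / x) 0) = δ * t / x := by
          rw [max_eq_left hp0.le, min_eq_right hpδ]
        have hxt' : x / δ * (δ * t / x) = t := by field_simp
        rw [hmin, hxt'] at hw
        have htm : t ∈ Set.Icc (0:ℝ) x := ⟨h0.le, htx⟩
        rw [Set.indicator_of_mem htm]
        exact hw
  have key : (∫ t, welfare (mu x δ) (Measure.dirac (1-δ)) (quantileFn (mu x δ) t) ∂Q) ≤
      (x*δ/2 + (1-x)) + A := by
    have := integral_mono_of_nonneg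
      (ae_of_all _ (fun t => welfare_nonneg hx0 hx1 hδ (quantileFn (mu x δ) t) hb0))
      gint hle
    rw [integral_add (integrable_const _) hind_int, integral_const, probReal_univ,
      one_smul, integral_indicator measurableSet_Icc] at this
    exact this
  rw [opt_eq hx0 hx1 hδ hδ2]
  have hvA : A + 1 - x = v := hv.symm
  have h5 : x*δ ≤ δ := by nlinarith
  have h4 : (r+ε)*(x*δ) ≤ (1+ε)*δ := by
    calc (r+ε)*(x*δ) ≤ (1+ε)*(x*δ) :=
      mul_le_mul_of_nonneg_right (by linarith) (mul_nonneg hx0 hδ.le)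
    _ ≤ (1+ε)*δ := mul_le_mul_of_nonneg_left h5 (by linarith)
  have h6 : (r+ε)*(1-x*δ) = (r+ε) - (r+ε)*(x*δ) := by ring
  rw [h6]
  have : (x*δ/2 + (1-x)) + A ≤ δ/2 + r + ε/2 := by linarith
  linarith [key]
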